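/- Let A be a finite-dimensional algebra over an algebraically closed field. Then A admits an infinite Hom-orthogonal set of finite-dimensional modules if and only if A admits an infinite Hom-orthogonal set of bricks (an infinite semibrick). -/

import Mathlib

universe u v

open Module

/-- A finite-dimensional left module over the `k`-algebra `A`. -/
structure FDMod (k A : Type u) [Field k] [Ring A] [Algebra k A] : Type (u + 1) where
  carrier : Type u
  [addCommGroup : AddCommGroup carrier]
  [moduleK : Module k carrier]
  [moduleA : Module A carrier]
  [tower : IsScalarTower k A carrier]
  [fd : FiniteDimensional k carrier]

attribute [instance] FDMod.addCommGroup FDMod.moduleK FDMod.moduleA FDMod.tower FDMod.fd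

variable {k A : Type u} [Field k] [Ring A] [Algebra k A]

/-- `M` is a brick: `M ≠ 0` and every `A`-endomorphism of `M` is a `k`-scalar,
i.e. `End_A(M) ≅ k`. -/
def FDMod.IsBrick (M : FDMod k A) : Prop :=
  Nontrivial M.carrier ∧ ∀ f : M.carrier →ₗ[A] M.carrier, ∃ c : k, ∀ x : M.carrier, f x = c • x

/-- `M` and `N` are Hom-orthogonal: `Hom_A(M,N) = 0` and `Hom_A(N,M) = 0`. -/
def FDMod.HomOrth (M N : FDMod k A) : Prop :=
  (∀ f : M.carrier →ₗ[A] N.carrier, f = 0) ∧ (∀ f : N.carrier →ₗ[A] M.carrier, f = 0)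

/-- `M` and `N` are isomorphic as `A`-modules. -/
def FDMod.Iso (M N : FDMod k A) : Prop :=
  Nonempty (M.carrier ≃ₗ[A] N.carrier)

/-- A family of modules forms a Hom-orthogonal set: the modules are nonzero,
pairwise non-isomorphic and pairwise Hom-orthogonal. -/
def HomOrthFamily {I : Type v} (X : I → FDMod k A) : Prop :=
  (∀ i, Nontrivial (X i).carrier) ∧
  (∀ i j, i ≠ j → ¬(X i).Iso (X j)) ∧
  (∀ i j, i ≠ j → (X i).HomOrth (X j))

/-- `A` is brick-finite: there are only finitely many isomorphism classes of bricks. -/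
def BrickFinite (k A : Type u) [Field k] [Ring A] [Algebra k A] : Prop :=
  ∃ (m : ℕ) (f : Fin m → FDMod k A), ∀ N : FDMod k A, N.IsBrick → ∃ i, N.Iso (f i)

/-- `A` has rank `n`: there are exactly `n` isomorphism classes of simple modules. -/
def HasRank (k A : Type u) [Field k] [Ring A] [Algebra k A] (n : ℕ) : Prop :=
  ∃ S : Fin n → FDMod k A,
    (∀ i, IsSimpleModule A (S i).carrier) ∧
    (∀ i j, i ≠ j → ¬(S i).Iso (S j)) ∧
    (∀ T : FDMod k A, IsSimpleModule A T.carrier → ∃ i, T.Iso (S i))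

lemma exists_brick_aux [IsAlgClosed k] :
    ∀ (n : ℕ) (M : FDMod k A), Nontrivial M.carrier → finrank k M.carrier ≤ n →
    ∃ B : FDMod k A, B.IsBrick ∧
      (∀ Y : FDMod k A, (∀ g : M.carrier →ₗ[A] Y.carrier, g = 0) →
        ∀ g : B.carrier →ₗ[A] Y.carrier, g = 0) ∧
      (∀ Y : FDMod k A, (∀ g : Y.carrier →ₗ[A] M.carrier, g = 0) →
        ∀ g : Y.carrier →ₗ[A] B.carrier, g = 0) := by
  intro n
  induction n with
  | zero =>
    intro M hM hle
    have : 0 < finrank k M.carrier := Module.finrank_pos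
    omega
  | succ n ih =>
    intro M hM hle
    by_cases hbr : ∀ f : M.carrier →ₗ[A] M.carrier, ∃ c : k, ∀ x, f x = c • x
    · exact ⟨M, ⟨hM, hbr⟩, fun Y h g => h g, fun Y h g => h g⟩
    · push_neg at hbr
      obtain ⟨f, hf⟩ := hbr
      obtain ⟨c, hc⟩ :=
        Module.End.exists_eigenvalue (LinearMap.restrictScalars k f : Module.End k M.carrier)
      obtain ⟨x₀, hx₀mem, hx₀ne⟩ := hc.exists_hasEigenvector
      have hx₀ : f x₀ = c • x₀ := Module.End.mem_eigenspace_iff.mp hx₀mem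
      set g : M.carrier →ₗ[A] M.carrier := f - c • LinearMap.id with hgdef
      have hgx₀ : g x₀ = 0 := by
        simp [hgdef, hx₀]
      have hgne : g ≠ 0 := by
        obtain ⟨x, hx⟩ := hf c
        intro h0
        apply hx
        have := congrArg (fun φ => φ x) h0
        simp [hgdef] at this
        simpa [sub_eq_zero] using this
      set p : Submodule A M.carrier := LinearMap.range g with hpdef
      have hpne : p ≠ ⊥ := by
        simpa [hpdef, LinearMap.range_eq_bot] using hgne
      haveI hpnt : Nontrivial p := Submodule.nontrivial_iff_ne_bot.mpr hpne
      have hptop : p ≠ ⊤ := by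
        intro htop
        have hsurj : Function.Surjective g := LinearMap.range_eq_top.mp htop
        have hsurj' : Function.Surjective (LinearMap.restrictScalars k g) := hsurj
        have hinj : Function.Injective (LinearMap.restrictScalars k g) :=
          LinearMap.injective_iff_surjective.mpr hsurj'
        exact hx₀ne (by simpa using hinj (a₁ := x₀) (a₂ := 0) (by simpa using hgx₀))
      haveI : FiniteDimensional k p :=
        FiniteDimensional.of_injective (LinearMap.restrictScalars k p.subtype)
          Subtype.val_injective
      have hfr : finrank k p < finrank k M.carrier := by
        have h1 : (p.restrictScalars k) < ⊤ := by
          rcases lt_top_iff_ne_top.mpr (fun h => hptop (by simpa using h)) with h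
          exact h
        have h2 := Submodule.finrank_lt (K := k) (V := M.carrier) h1.ne
        have h3 : finrank k (p.restrictScalars k) = finrank k p :=
          LinearEquiv.finrank_eq
            ((Submodule.restrictScalarsEquiv k A M.carrier p).restrictScalars k)
        omega
      set M' : FDMod k A := { carrier := p } with hM'def
      obtain ⟨B, hB, hBl, hBr⟩ := ih M' hpnt (by
        have : finrank k M'.carrier = finrank k p := rfl
        omega)
      refine ⟨B, hB, ?_, ?_⟩
      · intro Y hY h
        apply hBl Y ?_ h
        intro g'
        have hcomp : g'.comp g.rangeRestrict = 0 := hY _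
        ext z
        obtain ⟨x, hx⟩ := z.2
        have : z = g.rangeRestrict x := Subtype.ext hx.symm
        rw [this]
        have := congrArg (fun φ => φ x) hcomp
        simpa using this
      · intro Y hY h
        apply hBr Y ?_ h
        intro g'
        have hcomp : p.subtype.comp g' = 0 := hY _
        ext y
        have := congrArg (fun φ => φ y) hcomp
        simpa using this

lemma exists_brick [IsAlgClosed k] (M : FDMod k A) (hM : Nontrivial M.carrier) :
    ∃ B : FDMod k A, B.IsBrick ∧
      (∀ Y : FDMod k A, (∀ g : M.carrier →ₗ[A] Y.carrier, g = 0) →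
        ∀ g : B.carrier →ₗ[A] Y.carrier, g = 0) ∧
      (∀ Y : FDMod k A, (∀ g : Y.carrier →ₗ[A] M.carrier, g = 0) →
        ∀ g : Y.carrier →ₗ[A] B.carrier, g = 0) :=
  exists_brick_aux (finrank k M.carrier) M hM le_rfl

/-- `A` admits an infinite Hom-orthogonal set of finite-dimensional
modules if and only if `A` admits an infinite Hom-orthogonal set of bricks (an
infinite semibrick). -/
theorem stmt6 {k A : Type u} [Field k] [IsAlgClosed k] [Ring A] [Algebra k A]
    [FiniteDimensional k A] :
    (∃ (I : Type u) (X : I → FDMod k A), Infinite I ∧ HomOrthFamily X) ↔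
    (∃ (I : Type u) (X : I → FDMod k A), Infinite I ∧ HomOrthFamily X ∧
      ∀ i, (X i).IsBrick) := by
  constructor
  · rintro ⟨I, X, hI, h1, h2, h3⟩
    choose B hBbrick hBl hBr using fun i => exists_brick (X i) (h1 i)
    have horthL : ∀ i j, i ≠ j → ∀ g : (B i).carrier →ₗ[A] (B j).carrier, g = 0 := by
      intro i j hij g
      exact hBr j (B i) (fun g' => hBl i (X j) (h3 i j hij).1 g') g
    refine ⟨I, B, hI, ⟨fun i => (hBbrick i).1, ?_, ?_⟩, hBbrick⟩
    · intro i j hij ⟨e⟩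
      haveI := (hBbrick i).1
      obtain ⟨x, hx⟩ := exists_ne (0 : (B i).carrier)
      apply hx
      apply e.injective
      have : e.toLinearMap = 0 := horthL i j hij e.toLinearMap
      have hz := congrArg (fun φ => φ x) this
      simpa using hz
    · intro i j hij
      exact ⟨horthL i j hij, horthL j i (Ne.symm hij)⟩
  · rintro ⟨I, X, hI, hX, _⟩
    exact ⟨I, X, hI, hX⟩
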